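/- Let (X,S,T) be a distal minimal system with commuting transformations S and T. Then R_{S,T}(X) is a closed equivalence relation on X. -/

import Mathlib

/-- The `n`-th integer iterate of a homeomorphism, as a function. -/
def hpow {X : Type*} [TopologicalSpace X] (S : X ≃ₜ X) (n : ℤ) : X → X :=
  ⇑(S.toEquiv ^ n)

variable {X : Type*} [TopologicalSpace X]

def cube (S T : X ≃ₜ X) : Set (X × X × X × X) :=
  closure {p | ∃ (x : X) (n m : ℤ),
    p = (x, hpow S n x, hpow T m x, hpow S n (hpow T m x))}

def cube2 (S : X ≃ₜ X) : Set (X × X) :=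
  closure {p | ∃ (x : X) (n : ℤ), p = (x, hpow S n x)}

def relS (S T : X ≃ₜ X) : Set (X × X) :=
  {p | ∃ a : X, (p.1, p.2, a, a) ∈ cube S T}

def relT (S T : X ≃ₜ X) : Set (X × X) :=
  {p | ∃ b : X, (p.1, b, p.2, b) ∈ cube S T}

def minimalST (S T : X ≃ₜ X) : Prop :=
  ∀ x : X, Dense {y : X | ∃ n m : ℤ, y = hpow S n (hpow T m x)}

def minimal1 (S : X ≃ₜ X) : Prop :=
  ∀ x : X, Dense {y : X | ∃ n : ℤ, y = hpow S n x}

def distalST {Y : Type*} [MetricSpace Y] (S T : Y ≃ₜ Y) : Prop :=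
  ∀ x y : Y, x ≠ y → ∃ ε > 0, ∀ n m : ℤ,
    ε ≤ dist (hpow S n (hpow T m x)) (hpow S n (hpow T m y))

def proxT {Y : Type*} [MetricSpace Y] (T : Y ≃ₜ Y) : Set (Y × Y) :=
  {p | ∀ ε > 0, ∃ m : ℤ, dist (hpow T m p.1) (hpow T m p.2) < ε}

namespace Stmt12Aux

section hpowLemmas

variable {X : Type*} [TopologicalSpace X]

lemma continuous_hpow (S : X ≃ₜ X) (n : ℤ) : Continuous (hpow S n) := by
  unfold hpow
  cases n with
  | ofNat k =>
      rw [Int.ofNat_eq_coe, zpow_natCast, Equiv.Perm.coe_pow]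
      exact S.continuous.iterate k
  | negSucc k =>
      rw [zpow_negSucc, ← inv_pow, Equiv.Perm.coe_pow, Equiv.Perm.inv_def]
      have : ⇑S.toEquiv.symm = ⇑S.symm := S.coe_symm_toEquiv
      rw [this]
      exact S.symm.continuous.iterate _

lemma hpow_zero (S : X ≃ₜ X) (x : X) : hpow S 0 x = x := by
  simp [hpow]

lemma hpow_add (S : X ≃ₜ X) (a b : ℤ) (x : X) :
    hpow S a (hpow S b x) = hpow S (a + b) x := by
  simp only [hpow, zpow_add]
  rfl

lemma hpow_comm (S T : X ≃ₜ X) (hST : ∀ x, S (T x) = T (S x)) (n m : ℤ) (x : X) :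
    hpow S n (hpow T m x) = hpow T m (hpow S n x) := by
  have hc : Commute S.toEquiv T.toEquiv := by
    apply Equiv.ext
    intro x
    simpa using hST x
  have := (hc.zpow_zpow n m)
  have h2 := congrFun (congrArg (fun (e : Equiv.Perm X) => (e : X → X)) this) x
  simpa [hpow] using h2

end hpowLemmas

/-! ### Abstract Ellis semigroup machinery -/

section Ellis

variable {W : Type*} [MetricSpace W] [CompactSpace W]
set_option linter.unusedSectionVars false

/-- The Ellis semigroup (closure of a set of self-maps in the product topology). -/
def EE (M : Set (W → W)) : Set (W → W) := closure M

lemma isCompact_EE (M : Set (W → W)) : IsCompact (EE M) :=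
  isClosed_closure.isCompact

lemma continuous_comp_right (g : W → W) :
    Continuous (fun f : W → W => f ∘ g) :=
  continuous_pi fun x => continuous_apply (g x)

lemma continuous_comp_left {f : W → W} (hf : Continuous f) :
    Continuous (fun g : W → W => f ∘ g) :=
  continuous_pi fun x => hf.comp (continuous_apply x)

variable {M : Set (W → W)}

lemma EE_comp (hcomp : ∀ f ∈ M, ∀ g ∈ M, f ∘ g ∈ M)
    (hcont : ∀ f ∈ M, Continuous f)
    {u v : W → W} (hu : u ∈ EE M) (hv : v ∈ EE M) : u ∘ v ∈ EE M := by
  have h1 : ∀ f ∈ M, f ∘ v ∈ EE M := by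
    intro f hf
    exact map_mem_closure (continuous_comp_left (hcont f hf)) hv
      (fun g hg => hcomp f hf g hg)
  have := map_mem_closure (continuous_comp_right v) hu h1
  rwa [show closure (EE M) = EE M from closure_closure] at this

lemma EE_invariant {Q : Set W} (hQc : IsClosed Q)
    (hinv : ∀ f ∈ M, ∀ z ∈ Q, f z ∈ Q)
    {u : W → W} (hu : u ∈ EE M) {z : W} (hz : z ∈ Q) : u z ∈ Q := by
  have : (fun f : W → W => f z) u ∈ closure Q :=
    map_mem_closure (f := fun f : W → W => f z) (continuous_apply z) hu
      (fun f hf => hinv f hf z hz)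
  rwa [hQc.closure_eq] at this

lemma EE_orbit (M : Set (W → W)) (z : W) :
    closure {w | ∃ f ∈ M, w = f z} = (fun u : W → W => u z) '' EE M := by
  apply Set.Subset.antisymm
  · apply closure_minimal
    · rintro w ⟨f, hf, rfl⟩
      exact ⟨f, subset_closure hf, rfl⟩
    · exact ((isCompact_EE M).image (continuous_apply z)).isClosed
  · rintro _ ⟨u, hu, rfl⟩
    exact map_mem_closure (f := fun u : W → W => u z) (continuous_apply z) hu
      (fun f hf => ⟨f, hf, rfl⟩)

lemma EE_idem_eq_id
    (hdist : ∀ x y : W, x ≠ y → ∃ ε > 0, ∀ f ∈ M, ε ≤ dist (f x) (f y))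
    {u : W → W} (hu : u ∈ EE M) (hidem : u ∘ u = u) : u = id := by
  funext x
  by_contra hne
  obtain ⟨ε, hε, hεd⟩ := hdist x (u x) (fun h => hne h.symm)
  have hC : IsClosed {f : W → W | ε ≤ dist (f x) (f (u x))} :=
    isClosed_le continuous_const ((continuous_apply x).dist (continuous_apply (u x)))
  have hu' : u ∈ {f : W → W | ε ≤ dist (f x) (f (u x))} := by
    have : M ⊆ {f : W → W | ε ≤ dist (f x) (f (u x))} := fun f hf => hεd f hf
    exact closure_minimal this hC hu
  have huu : u (u x) = u x := congrFun hidem x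
  rw [Set.mem_setOf_eq, huu, dist_self] at hu'
  exact absurd (lt_of_lt_of_le hε hu') (lt_irrefl 0)

local instance : TopologicalSpace (Function.End W) :=
  inferInstanceAs (TopologicalSpace (W → W))

local instance : CompactSpace (Function.End W) :=
  inferInstanceAs (CompactSpace (W → W))

local instance : T2Space (Function.End W) :=
  inferInstanceAs (T2Space (W → W))

lemma EE_exists_left_inv (hid : id ∈ M)
    (hcomp : ∀ f ∈ M, ∀ g ∈ M, f ∘ g ∈ M)
    (hcont : ∀ f ∈ M, Continuous f)
    (hdist : ∀ x y : W, x ≠ y → ∃ ε > 0, ∀ f ∈ M, ε ≤ dist (f x) (f y))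
    {p : W → W} (hp : p ∈ EE M) : ∃ q ∈ EE M, q ∘ p = id := by
  set A : Set (Function.End W) := (fun f : W → W => f ∘ p) '' EE M with hA
  have hAsub : ∀ a ∈ A, (a : W → W) ∈ EE M := by
    rintro _ ⟨f, hf, rfl⟩
    exact EE_comp hcomp hcont hf hp
  have hAne : A.Nonempty := ⟨id ∘ p, ⟨id, subset_closure hid, rfl⟩⟩
  have hAcomp : IsCompact A := (isCompact_EE M).image (continuous_comp_right p)
  have hAmul : ∀ a ∈ A, ∀ b ∈ A, a * b ∈ A := by
    intro a ha b hb
    obtain ⟨f, hf, hfe⟩ := ha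
    obtain ⟨g, hg, hge⟩ := hb
    refine ⟨f ∘ (p ∘ g), ?_, ?_⟩
    · exact EE_comp hcomp hcont hf (EE_comp hcomp hcont hp hg)
    · show (f ∘ (p ∘ g)) ∘ p = a * b
      rw [← hfe, ← hge]
      rfl
  obtain ⟨u, huA, huu⟩ := @exists_idempotent_in_compact_subsemigroup (Function.End W) _ _ inferInstance
    (fun r : Function.End W => continuous_comp_right (r : W → W)) A hAne hAcomp hAmul
  have hu : (u : W → W) ∈ EE M := hAsub u huA
  have huid : (u : W → W) = id := EE_idem_eq_id hdist hu huu
  rw [huid] at huA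
  obtain ⟨q, hq, hqp⟩ := huA
  exact ⟨q, hq, hqp⟩

lemma EE_exists_inv (hid : id ∈ M)
    (hcomp : ∀ f ∈ M, ∀ g ∈ M, f ∘ g ∈ M)
    (hcont : ∀ f ∈ M, Continuous f)
    (hdist : ∀ x y : W, x ≠ y → ∃ ε > 0, ∀ f ∈ M, ε ≤ dist (f x) (f y))
    {p : W → W} (hp : p ∈ EE M) : ∃ q ∈ EE M, q ∘ p = id ∧ p ∘ q = id := by
  obtain ⟨q, hq, hqp⟩ := EE_exists_left_inv hid hcomp hcont hdist hp
  obtain ⟨r, hr, hrq⟩ := EE_exists_left_inv hid hcomp hcont hdist hq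
  have hrp : r = p := by
    calc r = r ∘ (q ∘ p) := by rw [hqp]; rfl
    _ = (r ∘ q) ∘ p := rfl
    _ = p := by rw [hrq]; rfl
  refine ⟨q, hq, hqp, ?_⟩
  rw [← hrp]; exact hrq

/-- Minimality of orbit closures for "distal" families. -/
lemma EE_min (hid : id ∈ M)
    (hcomp : ∀ f ∈ M, ∀ g ∈ M, f ∘ g ∈ M)
    (hcont : ∀ f ∈ M, Continuous f)
    (hdist : ∀ x y : W, x ≠ y → ∃ ε > 0, ∀ f ∈ M, ε ≤ dist (f x) (f y))
    {z0 ξ : W} (hξ : ξ ∈ closure {w | ∃ f ∈ M, w = f z0}) :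
    closure {w | ∃ f ∈ M, w = f z0} = closure {w | ∃ f ∈ M, w = f ξ} := by
  have horb := EE_orbit M z0
  have horbξ := EE_orbit M ξ
  obtain ⟨u, hu, huz⟩ : ∃ u ∈ EE M, ξ = u z0 := by
    rw [horb] at hξ; obtain ⟨u, hu, h⟩ := hξ; exact ⟨u, hu, h.symm⟩
  obtain ⟨q, hq, hqu, _⟩ := EE_exists_inv hid hcomp hcont hdist hu
  apply Set.Subset.antisymm
  · rw [horb, horbξ]
    rintro _ ⟨v, hv, rfl⟩
    refine ⟨v ∘ q, EE_comp hcomp hcont hv hq, ?_⟩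
    show (v ∘ q) ξ = v z0
    rw [huz]
    show v (q (u z0)) = v z0
    rw [show q (u z0) = (q ∘ u) z0 from rfl, hqu]
    rfl
  · rw [horbξ]
    rintro _ ⟨v, hv, rfl⟩
    have hinv : ∀ f ∈ M, ∀ z ∈ closure {w | ∃ f ∈ M, w = f z0},
        f z ∈ closure {w | ∃ f ∈ M, w = f z0} := by
      intro f hf z hz
      apply map_mem_closure (hcont f hf) hz
      rintro _ ⟨g, hg, rfl⟩
      exact ⟨f ∘ g, hcomp f hf g hg, rfl⟩
    exact EE_invariant isClosed_closure hinv hv hξ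

end Ellis

section Concrete

variable {X : Type*} [MetricSpace X] [CompactSpace X] (S T : X ≃ₜ X)
set_option linter.unusedSectionVars false

/-- `ee n m = S^n T^m` as a function. -/
def ee (n m : ℤ) : X → X := fun x => hpow S n (hpow T m x)

lemma continuous_ee (n m : ℤ) : Continuous (ee S T n m) :=
  (continuous_hpow S n).comp (continuous_hpow T m)

variable {S T}

lemma ee_comp (hST : ∀ x, S (T x) = T (S x)) (a b a' b' : ℤ) (x : X) :
    ee S T a b (ee S T a' b' x) = ee S T (a + a') (b + b') x := by
  show hpow S a (hpow T b (hpow S a' (hpow T b' x)))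
      = hpow S (a + a') (hpow T (b + b') x)
  rw [(hpow_comm S T hST a' b (hpow T b' x)).symm, hpow_add, hpow_add]

lemma ee_T (hST : ∀ x, S (T x) = T (S x)) (d a b : ℤ) (x : X) :
    hpow T d (ee S T a b x) = ee S T a (b + d) x := by
  show hpow T d (hpow S a (hpow T b x)) = hpow S a (hpow T (b + d) x)
  rw [← hpow_comm S T hST a d (hpow T b x), hpow_add, add_comm d b]

lemma ee_zero (x : X) : ee S T 0 0 x = x := by
  show hpow S 0 (hpow T 0 x) = x
  rw [hpow_zero, hpow_zero]

lemma eeS (n : ℤ) (x : X) : hpow S n x = ee S T n 0 x := by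
  show hpow S n x = hpow S n (hpow T 0 x)
  rw [hpow_zero]

lemma eeT (m : ℤ) (x : X) : hpow T m x = ee S T 0 m x := by
  show hpow T m x = hpow S 0 (hpow T m x)
  rw [hpow_zero]

variable (S T)

/-- Componentwise action on the 4-fold product. -/
def map4 (f0 f1 f2 f3 : X → X) : X × X × X × X → X × X × X × X :=
  fun p => (f0 p.1, f1 p.2.1, f2 p.2.2.1, f3 p.2.2.2)

def MG : Set (X → X) := {f | ∃ n m : ℤ, f = ee S T n m}

def MH : Set (X × X → X × X) :=
  {f | ∃ a b d : ℤ, f = fun ξ => (ee S T a b ξ.1, ee S T a (b + d) ξ.2)}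

def MGG : Set ((X × X × X × X) → (X × X × X × X)) :=
  {F | ∃ a b c d : ℤ, F = map4 (ee S T a b) (ee S T (a + c) b)
      (ee S T a (b + d)) (ee S T (a + c) (b + d))}

variable {S T}

lemma MG_id : id ∈ MG S T :=
  ⟨0, 0, funext fun x => (ee_zero x).symm⟩

lemma MG_comp (hST : ∀ x, S (T x) = T (S x)) : ∀ f ∈ MG S T, ∀ g ∈ MG S T, f ∘ g ∈ MG S T := by
  rintro f ⟨n, m, rfl⟩ g ⟨n', m', rfl⟩
  exact ⟨n + n', m + m', funext fun x => ee_comp hST n m n' m' x⟩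

lemma MG_cont : ∀ f ∈ MG S T, Continuous f := by
  rintro f ⟨n, m, rfl⟩
  exact continuous_ee S T n m

lemma MG_dist (hd : distalST S T) :
    ∀ x y : X, x ≠ y → ∃ ε > 0, ∀ f ∈ MG S T, ε ≤ dist (f x) (f y) := by
  intro x y hxy
  obtain ⟨ε, hε, hεd⟩ := hd x y hxy
  refine ⟨ε, hε, ?_⟩
  rintro f ⟨n, m, rfl⟩
  exact hεd n m

lemma MH_id : id ∈ MH S T := by
  refine ⟨0, 0, 0, funext fun ξ => ?_⟩
  show ξ = (ee S T 0 0 ξ.1, ee S T 0 (0 + 0) ξ.2)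
  rw [show (0 + 0 : ℤ) = 0 from rfl, ee_zero, ee_zero]

lemma MH_comp (hST : ∀ x, S (T x) = T (S x)) : ∀ f ∈ MH S T, ∀ g ∈ MH S T, f ∘ g ∈ MH S T := by
  rintro f ⟨a, b, d, rfl⟩ g ⟨a', b', d', rfl⟩
  refine ⟨a + a', b + b', d + d', funext fun ξ => ?_⟩
  show (ee S T a b (ee S T a' b' ξ.1), ee S T a (b + d) (ee S T a' (b' + d') ξ.2))
      = (ee S T (a + a') (b + b') ξ.1, ee S T (a + a') (b + b' + (d + d')) ξ.2)
  rw [ee_comp hST, ee_comp hST, show b + d + (b' + d') = b + b' + (d + d') by ring]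

lemma MH_cont : ∀ f ∈ MH S T, Continuous f := by
  rintro f ⟨a, b, d, rfl⟩
  exact ((continuous_ee S T a b).comp continuous_fst).prodMk
    ((continuous_ee S T a (b + d)).comp continuous_snd)

lemma distp1 {A B : Type*} [MetricSpace A] [MetricSpace B] (x y : A × B) :
    dist x.1 y.1 ≤ dist x y := by
  rw [Prod.dist_eq]; exact le_max_left _ _
lemma distp2 {A B : Type*} [MetricSpace A] [MetricSpace B] (x y : A × B) :
    dist x.2 y.2 ≤ dist x y := by
  rw [Prod.dist_eq]; exact le_max_right _ _

lemma MH_dist (hd : distalST S T) :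
    ∀ ξ υ : X × X, ξ ≠ υ → ∃ ε > 0, ∀ f ∈ MH S T, ε ≤ dist (f ξ) (f υ) := by
  intro ξ υ hne
  have h : ξ.1 ≠ υ.1 ∨ ξ.2 ≠ υ.2 := by
    by_contra hc
    push_neg at hc
    exact hne (Prod.ext hc.1 hc.2)
  rcases h with h | h
  · obtain ⟨ε, hε, hεd⟩ := hd ξ.1 υ.1 h
    refine ⟨ε, hε, ?_⟩
    rintro f ⟨a, b, d, rfl⟩
    exact le_trans (hεd a b) (distp1 (((fun ξ => (ee S T a b ξ.1, ee S T a (b + d) ξ.2)) : X × X → X × X) ξ) (((fun ξ => (ee S T a b ξ.1, ee S T a (b + d) ξ.2)) : X × X → X × X) υ))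
  · obtain ⟨ε, hε, hεd⟩ := hd ξ.2 υ.2 h
    refine ⟨ε, hε, ?_⟩
    rintro f ⟨a, b, d, rfl⟩
    exact le_trans (hεd a (b + d)) (distp2 (((fun ξ => (ee S T a b ξ.1, ee S T a (b + d) ξ.2)) : X × X → X × X) ξ) (((fun ξ => (ee S T a b ξ.1, ee S T a (b + d) ξ.2)) : X × X → X × X) υ))

lemma MGG_id : id ∈ MGG S T := by
  refine ⟨0, 0, 0, 0, funext fun p => ?_⟩
  show p = map4 (ee S T 0 0) (ee S T (0 + 0) 0) (ee S T 0 (0 + 0))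
      (ee S T (0 + 0) (0 + 0)) p
  show p = (ee S T 0 0 p.1, ee S T (0 + 0) 0 p.2.1, ee S T 0 (0 + 0) p.2.2.1,
      ee S T (0 + 0) (0 + 0) p.2.2.2)
  rw [show (0 + 0 : ℤ) = 0 from rfl, ee_zero, ee_zero, ee_zero, ee_zero]

lemma MGG_comp (hST : ∀ x, S (T x) = T (S x)) : ∀ f ∈ MGG S T, ∀ g ∈ MGG S T, f ∘ g ∈ MGG S T := by
  rintro f ⟨a, b, c, d, rfl⟩ g ⟨a', b', c', d', rfl⟩
  refine ⟨a + a', b + b', c + c', d + d', funext fun p => ?_⟩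
  show (ee S T a b (ee S T a' b' p.1),
        ee S T (a + c) b (ee S T (a' + c') b' p.2.1),
        ee S T a (b + d) (ee S T a' (b' + d') p.2.2.1),
        ee S T (a + c) (b + d) (ee S T (a' + c') (b' + d') p.2.2.2))
      = (ee S T (a + a') (b + b') p.1,
        ee S T (a + a' + (c + c')) (b + b') p.2.1,
        ee S T (a + a') (b + b' + (d + d')) p.2.2.1,
        ee S T (a + a' + (c + c')) (b + b' + (d + d')) p.2.2.2)
  rw [ee_comp hST, ee_comp hST, ee_comp hST, ee_comp hST,
    show a + c + (a' + c') = a + a' + (c + c') by ring,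
    show b + d + (b' + d') = b + b' + (d + d') by ring]

lemma MGG_cont : ∀ f ∈ MGG S T, Continuous f := by
  rintro f ⟨a, b, c, d, rfl⟩
  unfold map4
  exact ((continuous_ee S T a b).comp continuous_fst).prodMk
    ((((continuous_ee S T (a + c) b).comp (continuous_fst.comp continuous_snd)).prodMk
      (((continuous_ee S T a (b + d)).comp
          (continuous_fst.comp (continuous_snd.comp continuous_snd))).prodMk
        ((continuous_ee S T (a + c) (b + d)).comp
          (continuous_snd.comp (continuous_snd.comp continuous_snd))))))

lemma dist4_1 (p q : X × X × X × X) : dist p.1 q.1 ≤ dist p q := distp1 _ _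
lemma dist4_2 (p q : X × X × X × X) : dist p.2.1 q.2.1 ≤ dist p q :=
  le_trans (distp1 _ _) (distp2 _ _)
lemma dist4_3 (p q : X × X × X × X) : dist p.2.2.1 q.2.2.1 ≤ dist p q :=
  le_trans (distp1 _ _) (le_trans (distp2 _ _) (distp2 _ _))
lemma dist4_4 (p q : X × X × X × X) : dist p.2.2.2 q.2.2.2 ≤ dist p q :=
  le_trans (distp2 _ _) (le_trans (distp2 _ _) (distp2 _ _))

lemma MGG_dist (hd : distalST S T) :
    ∀ p q : X × X × X × X, p ≠ q → ∃ ε > 0, ∀ f ∈ MGG S T, ε ≤ dist (f p) (f q) := by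
  intro p q hne
  have h : p.1 ≠ q.1 ∨ p.2.1 ≠ q.2.1 ∨ p.2.2.1 ≠ q.2.2.1 ∨ p.2.2.2 ≠ q.2.2.2 := by
    by_contra hc
    push_neg at hc
    exact hne (Prod.ext hc.1 (Prod.ext hc.2.1 (Prod.ext hc.2.2.1 hc.2.2.2)))
  rcases h with h | h | h | h
  · obtain ⟨ε, hε, hεd⟩ := hd p.1 q.1 h
    refine ⟨ε, hε, ?_⟩
    rintro f ⟨a, b, c, d, rfl⟩
    exact le_trans (hεd a b) (dist4_1 (map4 (ee S T a b) (ee S T (a + c) b) (ee S T a (b + d)) (ee S T (a + c) (b + d)) p) (map4 (ee S T a b) (ee S T (a + c) b) (ee S T a (b + d)) (ee S T (a + c) (b + d)) q))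
  · obtain ⟨ε, hε, hεd⟩ := hd p.2.1 q.2.1 h
    refine ⟨ε, hε, ?_⟩
    rintro f ⟨a, b, c, d, rfl⟩
    exact le_trans (hεd (a + c) b) (dist4_2 (map4 (ee S T a b) (ee S T (a + c) b) (ee S T a (b + d)) (ee S T (a + c) (b + d)) p) (map4 (ee S T a b) (ee S T (a + c) b) (ee S T a (b + d)) (ee S T (a + c) (b + d)) q))
  · obtain ⟨ε, hε, hεd⟩ := hd p.2.2.1 q.2.2.1 h
    refine ⟨ε, hε, ?_⟩
    rintro f ⟨a, b, c, d, rfl⟩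
    exact le_trans (hεd a (b + d)) (dist4_3 (map4 (ee S T a b) (ee S T (a + c) b) (ee S T a (b + d)) (ee S T (a + c) (b + d)) p) (map4 (ee S T a b) (ee S T (a + c) b) (ee S T a (b + d)) (ee S T (a + c) (b + d)) q))
  · obtain ⟨ε, hε, hεd⟩ := hd p.2.2.2 q.2.2.2 h
    refine ⟨ε, hε, ?_⟩
    rintro f ⟨a, b, c, d, rfl⟩
    exact le_trans (hεd (a + c) (b + d)) (dist4_4 (map4 (ee S T a b) (ee S T (a + c) b) (ee S T a (b + d)) (ee S T (a + c) (b + d)) p) (map4 (ee S T a b) (ee S T (a + c) b) (ee S T a (b + d)) (ee S T (a + c) (b + d)) q))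

end Concrete

/-! ### Cube lemmas -/

section CubeLemmas

variable {X : Type*} [MetricSpace X] [CompactSpace X] {S T : X ≃ₜ X}
set_option linter.unusedSectionVars false

lemma gen_mem_cube (x : X) (n m : ℤ) :
    (x, hpow S n x, hpow T m x, hpow S n (hpow T m x)) ∈ cube S T :=
  subset_closure ⟨x, n, m, rfl⟩

lemma genT_mem (x : X) (m : ℤ) : ((x, hpow T m x) : X × X) ∈ cube2 T :=
  subset_closure ⟨x, m, rfl⟩

lemma diag_mem_cube2 (x : X) : ((x, x) : X × X) ∈ cube2 T := by
  have := genT_mem (T := T) x 0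
  rwa [hpow_zero] at this

lemma hpow_neg_cancel (S : X ≃ₜ X) (n : ℤ) (x : X) : hpow S (-n) (hpow S n x) = x := by
  rw [hpow_add, neg_add_cancel, hpow_zero]

/-- `cube` is invariant under the group `MGG`. -/
lemma cube_inv (hST : ∀ x, S (T x) = T (S x)) :
    ∀ F ∈ MGG S T, ∀ p ∈ cube S T, F p ∈ cube S T := by
  rintro F ⟨a, b, c, d, rfl⟩ p hp
  refine map_mem_closure (MGG_cont _ ⟨a, b, c, d, rfl⟩) hp ?_
  rintro _ ⟨x, n, m, rfl⟩
  refine ⟨ee S T a b x, n + c, m + d, ?_⟩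
  show (ee S T a b x,
        ee S T (a + c) b (hpow S n x),
        ee S T a (b + d) (hpow T m x),
        ee S T (a + c) (b + d) (ee S T n m x))
      = (ee S T a b x, hpow S (n + c) (ee S T a b x), hpow T (m + d) (ee S T a b x),
        ee S T (n + c) (m + d) (ee S T a b x))
  have h1 : ee S T (a + c) b (hpow S n x) = hpow S (n + c) (ee S T a b x) := by
    rw [eeS (S := S) (T := T) n x, eeS (S := S) (T := T) (n + c) (ee S T a b x),
      ee_comp hST, ee_comp hST, show a + c + n = n + c + a by ring,
      show b + (0 : ℤ) = 0 + b by ring]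
  have h2 : ee S T a (b + d) (hpow T m x) = hpow T (m + d) (ee S T a b x) := by
    rw [eeT (S := S) (T := T) m x, eeT (S := S) (T := T) (m + d) (ee S T a b x),
      ee_comp hST, ee_comp hST, show a + (0 : ℤ) = 0 + a by ring,
      show b + d + m = m + d + b by ring]
  have h3 : ee S T (a + c) (b + d) (ee S T n m x)
      = ee S T (n + c) (m + d) (ee S T a b x) := by
    rw [ee_comp hST, ee_comp hST, show a + c + n = n + c + a by ring,
      show b + d + m = m + d + b by ring]
  rw [h1, h2, h3]

lemma proj02_mem {p : X × X × X × X} (hp : p ∈ cube S T) :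
    ((p.1, p.2.2.1) : X × X) ∈ cube2 T := by
  refine map_mem_closure (f := fun p : X × X × X × X => ((p.1, p.2.2.1) : X × X))
    (continuous_fst.prodMk (continuous_fst.comp (continuous_snd.comp continuous_snd)))
    hp ?_
  rintro _ ⟨x, n, m, rfl⟩
  exact ⟨x, m, rfl⟩

lemma proj23_mem {p : X × X × X × X} (hp : p ∈ cube S T) :
    ((p.2.2.1, p.2.2.2) : X × X) ∈ cube2 S := by
  refine map_mem_closure (f := fun p : X × X × X × X => ((p.2.2.1, p.2.2.2) : X × X))
    ((continuous_fst.comp (continuous_snd.comp continuous_snd)).prodMk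
      (continuous_snd.comp (continuous_snd.comp continuous_snd))) hp ?_
  rintro _ ⟨x, n, m, rfl⟩
  exact ⟨hpow T m x, n, rfl⟩

lemma cube2S_symm {u v : X} (h : ((u, v) : X × X) ∈ cube2 S) :
    ((v, u) : X × X) ∈ cube2 S := by
  refine map_mem_closure (f := fun q : X × X => ((q.2, q.1) : X × X))
    (continuous_snd.prodMk continuous_fst) h ?_
  rintro _ ⟨x, n, rfl⟩
  exact ⟨hpow S n x, -n, by rw [hpow_neg_cancel]⟩

lemma cube2S_to_cube {u v : X} (h : ((u, v) : X × X) ∈ cube2 S) :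
    (u, v, u, v) ∈ cube S T := by
  refine map_mem_closure (f := fun q : X × X => (q.1, q.2, q.1, q.2))
    (continuous_fst.prodMk (continuous_snd.prodMk
      (continuous_fst.prodMk continuous_snd))) h ?_
  rintro _ ⟨x, n, rfl⟩
  refine ⟨x, n, 0, ?_⟩
  rw [hpow_zero]

lemma jY_mem {ξ : X × X} (hξ : ξ ∈ cube2 T) :
    ((ξ.1, ξ.1, ξ.2, ξ.2) : X × X × X × X) ∈ cube S T := by
  refine map_mem_closure (f := fun q : X × X => (q.1, q.1, q.2, q.2))
    (continuous_fst.prodMk (continuous_fst.prodMk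
      (continuous_snd.prodMk continuous_snd))) hξ ?_
  rintro _ ⟨x, m, rfl⟩
  refine ⟨x, 0, m, ?_⟩
  rw [hpow_zero, hpow_zero]

variable (hST : ∀ x, S (T x) = T (S x)) (hmin : minimalST S T) (hd : distalST S T)

lemma Yorbit (hST : ∀ x, S (T x) = T (S x)) (hmin : minimalST S T) (x0 : X) :
    cube2 T = closure {w : X × X | ∃ f ∈ MH S T, w = f (x0, x0)} := by
  apply Set.Subset.antisymm
  · apply closure_minimal ?_ isClosed_closure
    rintro _ ⟨x, m, rfl⟩
    have hx : x ∈ closure {y : X | ∃ n m : ℤ, y = hpow S n (hpow T m x0)} := hmin x0 x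
    refine map_mem_closure (f := fun u : X => ((u, hpow T m u) : X × X))
      (continuous_id.prodMk (continuous_hpow T m)) hx ?_
    rintro _ ⟨n, m', rfl⟩
    refine ⟨fun ξ : X × X => (ee S T n m' ξ.1, ee S T n (m' + m) ξ.2), ⟨n, m', m, rfl⟩, ?_⟩
    show ((ee S T n m' x0 : X), hpow T m (ee S T n m' x0)) = (ee S T n m' x0, ee S T n (m' + m) x0)
    rw [ee_T hST]
  · apply closure_minimal ?_ isClosed_closure
    rintro _ ⟨f, ⟨a, b, d, rfl⟩, rfl⟩
    refine subset_closure ⟨ee S T a b x0, d, ?_⟩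
    show ((ee S T a b x0 : X), ee S T a (b + d) x0) = (ee S T a b x0, hpow T d (ee S T a b x0))
    rw [ee_T hST]

lemma Ymin (hST : ∀ x, S (T x) = T (S x)) (hmin : minimalST S T) (hd : distalST S T)
    {ξ : X × X} (hξ : ξ ∈ cube2 T) :
    cube2 T = closure {w : X × X | ∃ f ∈ MH S T, w = f ξ} := by
  have h0 := Yorbit hST hmin ξ.1
  have hξ' : ξ ∈ closure {w : X × X | ∃ f ∈ MH S T, w = f (ξ.1, ξ.1)} := by
    rw [← h0]; exact hξ
  have h1 := EE_min MH_id (MH_comp hST) MH_cont (MH_dist hd) hξ'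
  rw [h0, h1]

lemma cube_orbit (hST : ∀ x, S (T x) = T (S x)) (hmin : minimalST S T) (hd : distalST S T)
    {ξ : X × X} (hξ : ξ ∈ cube2 T) :
    cube S T = closure {w : X × X × X × X | ∃ F ∈ MGG S T, w = F (ξ.1, ξ.1, ξ.2, ξ.2)} := by
  have horbinv : ∀ F ∈ MGG S T,
      ∀ p ∈ closure {w : X × X × X × X | ∃ F ∈ MGG S T, w = F (ξ.1, ξ.1, ξ.2, ξ.2)},
      F p ∈ closure {w : X × X × X × X | ∃ F ∈ MGG S T, w = F (ξ.1, ξ.1, ξ.2, ξ.2)} := by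
    intro F hF p hp
    refine map_mem_closure (MGG_cont F hF) hp ?_
    rintro _ ⟨G, hG, rfl⟩
    exact ⟨F ∘ G, MGG_comp hST F hF G hG, rfl⟩
  apply Set.Subset.antisymm
  · apply closure_minimal ?_ isClosed_closure
    rintro _ ⟨x, n, m, rfl⟩
    have hstep : ∀ υ ∈ cube2 T,
        ((υ.1, υ.1, υ.2, υ.2) : X × X × X × X)
          ∈ closure {w : X × X × X × X | ∃ F ∈ MGG S T, w = F (ξ.1, ξ.1, ξ.2, ξ.2)} := by
      intro υ hυ
      rw [Ymin hST hmin hd hξ] at hυ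
      refine map_mem_closure (f := fun q : X × X => ((q.1, q.1, q.2, q.2) : X × X × X × X))
        (continuous_fst.prodMk (continuous_fst.prodMk
          (continuous_snd.prodMk continuous_snd))) hυ ?_
      rintro _ ⟨f, ⟨a, b, d, rfl⟩, rfl⟩
      refine ⟨map4 (ee S T a b) (ee S T (a + 0) b) (ee S T a (b + d)) (ee S T (a + 0) (b + d)),
        ⟨a, b, 0, d, rfl⟩, ?_⟩
      show ((ee S T a b ξ.1 : X), ee S T a b ξ.1, ee S T a (b + d) ξ.2, ee S T a (b + d) ξ.2)
          = (ee S T a b ξ.1, ee S T (a + 0) b ξ.1, ee S T a (b + d) ξ.2,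
            ee S T (a + 0) (b + d) ξ.2)
      rw [add_zero]
    have hj := hstep (x, hpow T m x) (genT_mem (T := T) x m)
    have hF := horbinv
      (map4 (ee S T 0 0) (ee S T (0 + n) 0) (ee S T 0 (0 + 0)) (ee S T (0 + n) (0 + 0)))
      ⟨0, 0, n, 0, rfl⟩ _ hj
    have : map4 (ee S T 0 0) (ee S T (0 + n) 0) (ee S T 0 (0 + 0)) (ee S T (0 + n) (0 + 0))
        ((x, x, hpow T m x, hpow T m x) : X × X × X × X)
        = (x, hpow S n x, hpow T m x, hpow S n (hpow T m x)) := by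
      show ((ee S T 0 0 x : X), ee S T (0 + n) 0 x, ee S T 0 (0 + 0) (hpow T m x),
          ee S T (0 + n) (0 + 0) (hpow T m x))
        = (x, hpow S n x, hpow T m x, hpow S n (hpow T m x))
      rw [zero_add, add_zero, ee_zero, ← eeS (S := S) (T := T) n x,
        show ee S T 0 0 (hpow T m x) = hpow T m x from ee_zero _,
        ← eeS (S := S) (T := T) n (hpow T m x)]
    rw [this] at hF
    exact hF
  · apply closure_minimal ?_ isClosed_closure
    rintro _ ⟨F, hF, rfl⟩
    exact cube_inv hST F hF _ (jY_mem hξ)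

lemma cube_rep (hST : ∀ x, S (T x) = T (S x)) (hmin : minimalST S T) (hd : distalST S T)
    {ξ : X × X} (hξ : ξ ∈ cube2 T) {B : X × X × X × X} (hB : B ∈ cube S T) :
    ∃ q ∈ EE (MGG S T), q (ξ.1, ξ.1, ξ.2, ξ.2) = B := by
  rw [cube_orbit hST hmin hd hξ, EE_orbit (MGG S T) ((ξ.1, ξ.1, ξ.2, ξ.2) : X × X × X × X)]
    at hB
  obtain ⟨q, hq, h⟩ := hB
  exact ⟨q, hq, h⟩

end CubeLemmas

/-! ### Product structure of Ellis elements, and the main lemmas -/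

section Main

variable {X : Type*} [MetricSpace X] [CompactSpace X] {S T : X ≃ₜ X}
set_option linter.unusedSectionVars false

lemma EE_MGG_prod {u : (X × X × X × X) → (X × X × X × X)} (hu : u ∈ EE (MGG S T)) :
    ∃ q0 q1 q2 q3 : X → X, q0 ∈ EE (MG S T) ∧ q1 ∈ EE (MG S T) ∧ q2 ∈ EE (MG S T)
      ∧ q3 ∈ EE (MG S T) ∧ u = map4 q0 q1 q2 q3 := by
  set Ψ : ((X → X) × (X → X) × (X → X) × (X → X)) → ((X × X × X × X) → (X × X × X × X)) :=
    fun f => map4 f.1 f.2.1 f.2.2.1 f.2.2.2 with hΨ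
  have hΨc : Continuous Ψ := by
    apply continuous_pi
    intro p
    exact ((continuous_apply p.1).comp continuous_fst).prodMk
      ((((continuous_apply p.2.1).comp (continuous_fst.comp continuous_snd)).prodMk
        (((continuous_apply p.2.2.1).comp
            (continuous_fst.comp (continuous_snd.comp continuous_snd))).prodMk
          ((continuous_apply p.2.2.2).comp
            (continuous_snd.comp (continuous_snd.comp continuous_snd))))))
  have hK : IsCompact ((EE (MG S T)) ×ˢ ((EE (MG S T)) ×ˢ ((EE (MG S T)) ×ˢ (EE (MG S T))))) :=
    (isCompact_EE _).prod ((isCompact_EE _).prod ((isCompact_EE _).prod (isCompact_EE _)))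
  have himg : EE (MGG S T) ⊆ Ψ ''
      ((EE (MG S T)) ×ˢ ((EE (MG S T)) ×ˢ ((EE (MG S T)) ×ˢ (EE (MG S T))))) := by
    apply closure_minimal ?_ (hK.image hΨc).isClosed
    rintro F ⟨a, b, c, d, rfl⟩
    refine ⟨(ee S T a b, ee S T (a + c) b, ee S T a (b + d), ee S T (a + c) (b + d)), ?_, rfl⟩
    exact ⟨subset_closure ⟨a, b, rfl⟩, subset_closure ⟨a + c, b, rfl⟩,
      subset_closure ⟨a, b + d, rfl⟩, subset_closure ⟨a + c, b + d, rfl⟩⟩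
  obtain ⟨⟨q0, q1, q2, q3⟩, hmem, hEq⟩ := himg hu
  exact ⟨q0, q1, q2, q3, hmem.1, hmem.2.1, hmem.2.2.1, hmem.2.2.2, hEq.symm⟩

lemma EE_MH_prod {w : (X × X) → (X × X)} (hw : w ∈ EE (MH S T)) :
    ∃ r0 r2 : X → X, w = fun ξ : X × X => ((r0 ξ.1, r2 ξ.2) : X × X) := by
  set Ψ : ((X → X) × (X → X)) → ((X × X) → (X × X)) :=
    fun f => fun ξ : X × X => ((f.1 ξ.1, f.2 ξ.2) : X × X) with hΨ
  have hΨc : Continuous Ψ := by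
    apply continuous_pi
    intro p
    exact ((continuous_apply p.1).comp continuous_fst).prodMk
      ((continuous_apply p.2).comp continuous_snd)
  have hK : IsCompact ((EE (MG S T)) ×ˢ (EE (MG S T))) :=
    (isCompact_EE _).prod (isCompact_EE _)
  have himg : EE (MH S T) ⊆ Ψ '' ((EE (MG S T)) ×ˢ (EE (MG S T))) := by
    apply closure_minimal ?_ (hK.image hΨc).isClosed
    rintro F ⟨a, b, d, rfl⟩
    exact ⟨(ee S T a b, ee S T a (b + d)),
      ⟨subset_closure ⟨a, b, rfl⟩, subset_closure ⟨a, b + d, rfl⟩⟩, rfl⟩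
  obtain ⟨⟨r0, r2⟩, _, hEq⟩ := himg hw
  exact ⟨r0, r2, hEq.symm⟩

lemma Pi02_mem {u : (X × X × X × X) → (X × X × X × X)} (hu : u ∈ EE (MGG S T)) :
    (fun ξ : X × X => (((u (ξ.1, ξ.1, ξ.2, ξ.2)).1, (u (ξ.1, ξ.1, ξ.2, ξ.2)).2.2.1) : X × X))
      ∈ EE (MH S T) := by
  refine map_mem_closure
    (f := fun u : (X × X × X × X) → (X × X × X × X) =>
      fun ξ : X × X => (((u (ξ.1, ξ.1, ξ.2, ξ.2)).1, (u (ξ.1, ξ.1, ξ.2, ξ.2)).2.2.1) : X × X))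
    ?_ hu ?_
  · apply continuous_pi
    intro ξ
    exact (Continuous.fst (continuous_apply (ξ.1, ξ.1, ξ.2, ξ.2))).prodMk
      (Continuous.fst (Continuous.snd (Continuous.snd (continuous_apply (ξ.1, ξ.1, ξ.2, ξ.2)))))
  · rintro _ ⟨a, b, c, d, rfl⟩
    exact ⟨a, b, d, rfl⟩

lemma Delta2_mem {w : (X × X) → (X × X)} (hw : w ∈ EE (MH S T)) :
    (fun p : X × X × X × X =>
      (((w (p.1, p.2.2.1)).1, (w (p.2.1, p.2.2.2)).1,
        (w (p.1, p.2.2.1)).2, (w (p.2.1, p.2.2.2)).2) : X × X × X × X))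
      ∈ EE (MGG S T) := by
  refine map_mem_closure
    (f := fun w : (X × X) → (X × X) => fun p : X × X × X × X =>
      (((w (p.1, p.2.2.1)).1, (w (p.2.1, p.2.2.2)).1,
        (w (p.1, p.2.2.1)).2, (w (p.2.1, p.2.2.2)).2) : X × X × X × X))
    ?_ hw ?_
  · apply continuous_pi
    intro p
    exact (Continuous.fst (continuous_apply (p.1, p.2.2.1))).prodMk
      ((Continuous.fst (continuous_apply (p.2.1, p.2.2.2))).prodMk
        ((Continuous.snd (continuous_apply (p.1, p.2.2.1))).prodMk
          (Continuous.snd (continuous_apply (p.2.1, p.2.2.2)))))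
  · rintro _ ⟨a, b, d, rfl⟩
    refine ⟨a, b, 0, d, ?_⟩
    rw [add_zero]
    rfl

lemma Deltafull_mem {f : X → X} (hf : f ∈ EE (MG S T)) :
    map4 f f f f ∈ EE (MGG S T) := by
  refine map_mem_closure (f := fun f : X → X => map4 f f f f) ?_ hf ?_
  · apply continuous_pi
    intro p
    exact (continuous_apply p.1).prodMk ((continuous_apply p.2.1).prodMk
      ((continuous_apply p.2.2.1).prodMk (continuous_apply p.2.2.2)))
  · rintro _ ⟨n, m, rfl⟩
    refine ⟨n, m, 0, 0, ?_⟩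
    rw [add_zero, add_zero]

/-- The key composition lemma along the S-direction. -/
lemma Tstar (hST : ∀ x, S (T x) = T (S x)) (hmin : minimalST S T) (hd : distalST S T)
    {ξ1 η1 ξ2 η2 ζ1 ζ2 : X}
    (hA : (ξ1, η1, ξ2, η2) ∈ cube S T) (hB : (η1, ζ1, η2, ζ2) ∈ cube S T) :
    (ξ1, ζ1, ξ2, ζ2) ∈ cube S T := by
  have hξY : ((ξ1, ξ2) : X × X) ∈ cube2 T := proj02_mem hA
  obtain ⟨q, hq, hqB⟩ := cube_rep hST hmin hd hξY hB
  obtain ⟨q0, q1, q2, q3, hq0, hq1, hq2, hq3, rfl⟩ := EE_MGG_prod hq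
  have e0 : q0 ξ1 = η1 := congrArg (fun p : X × X × X × X => p.1) hqB
  have e1 : q1 ξ1 = ζ1 := congrArg (fun p : X × X × X × X => p.2.1) hqB
  have e2 : q2 ξ2 = η2 := congrArg (fun p : X × X × X × X => p.2.2.1) hqB
  have e3 : q3 ξ2 = ζ2 := congrArg (fun p : X × X × X × X => p.2.2.2) hqB
  have hv : (fun ξ : X × X => ((q0 ξ.1, q2 ξ.2) : X × X)) ∈ EE (MH S T) := Pi02_mem hq
  obtain ⟨w, hw, hwv, hvw⟩ := EE_exists_inv MH_id (MH_comp hST) MH_cont (MH_dist hd) hv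
  obtain ⟨r0, r2, rfl⟩ := EE_MH_prod hw
  have hr0 : ∀ u : X, r0 (q0 u) = u := by
    intro u
    exact congrArg (fun p : X × X => p.1) (congrFun hwv ((u, u) : X × X))
  have hr2 : ∀ u : X, r2 (q2 u) = u := by
    intro u
    exact congrArg (fun p : X × X => p.2) (congrFun hwv ((u, u) : X × X))
  have hq0r0 : ∀ u : X, q0 (r0 u) = u := by
    intro u
    exact congrArg (fun p : X × X => p.1) (congrFun hvw ((u, u) : X × X))
  have hq2r2 : ∀ u : X, q2 (r2 u) = u := by
    intro u
    exact congrArg (fun p : X × X => p.2) (congrFun hvw ((u, u) : X × X))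
  have hδ : (fun p : X × X × X × X =>
      ((r0 p.1, r0 p.2.1, r2 p.2.2.1, r2 p.2.2.2) : X × X × X × X)) ∈ EE (MGG S T) :=
    Delta2_mem hw
  have hh := EE_comp (MGG_comp hST) MGG_cont hq hδ
  have hmem := EE_invariant (Q := cube S T) isClosed_closure (cube_inv hST) hh hA
  have hcalc : (map4 q0 q1 q2 q3 ∘ fun p : X × X × X × X =>
      ((r0 p.1, r0 p.2.1, r2 p.2.2.1, r2 p.2.2.2) : X × X × X × X))
      ((ξ1, η1, ξ2, η2) : X × X × X × X) = (ξ1, ζ1, ξ2, ζ2) := by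
    show ((q0 (r0 ξ1), q1 (r0 η1), q2 (r2 ξ2), q3 (r2 η2)) : X × X × X × X)
      = (ξ1, ζ1, ξ2, ζ2)
    rw [hq0r0 ξ1, hq2r2 ξ2, ← e0, hr0 ξ1, e1, ← e2, hr2 ξ2, e3]
  rw [hcalc] at hmem
  exact hmem

lemma D2core (hST : ∀ x, S (T x) = T (S x)) (hmin : minimalST S T) (hd : distalST S T)
    {x y z : X} (hxy : (x, y, y, y) ∈ cube S T) (hyz : (y, z, z, z) ∈ cube S T) :
    (x, z, z, z) ∈ cube S T := by
  have hxx : ((x, x) : X × X) ∈ cube2 T := diag_mem_cube2 x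
  obtain ⟨q, hq, hqB⟩ := cube_rep hST hmin hd hxx hyz
  obtain ⟨q0, q1, q2, q3, hq0, hq1, hq2, hq3, rfl⟩ := EE_MGG_prod hq
  have e0 : q0 x = y := congrArg (fun p : X × X × X × X => p.1) hqB
  have e1 : q1 x = z := congrArg (fun p : X × X × X × X => p.2.1) hqB
  have e2 : q2 x = z := congrArg (fun p : X × X × X × X => p.2.2.1) hqB
  have e3 : q3 x = z := congrArg (fun p : X × X × X × X => p.2.2.2) hqB
  obtain ⟨r, hr, hrq, hqr⟩ := EE_exists_inv MG_id (MG_comp hST) MG_cont (MG_dist hd) hq0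
  have hδ := Deltafull_mem hr
  have hh := EE_comp (MGG_comp hST) MGG_cont hq hδ
  have hmem := EE_invariant (Q := cube S T) isClosed_closure (cube_inv hST) hh hxy
  have hry : r y = x := by
    rw [← e0]
    exact congrFun hrq x
  have hcalc : (map4 q0 q1 q2 q3 ∘ map4 r r r r) ((x, y, y, y) : X × X × X × X)
      = (x, z, z, z) := by
    show ((q0 (r x), q1 (r y), q2 (r y), q3 (r y)) : X × X × X × X) = (x, z, z, z)
    rw [hry, e1, e2, e3, show q0 (r x) = x from congrFun hqr x]
  rw [hcalc] at hmem
  exact hmem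

lemma D1 (hST : ∀ x, S (T x) = T (S x)) (hmin : minimalST S T) (hd : distalST S T)
    {x b y : X} (h : (x, b, y, b) ∈ cube S T) : (x, y, y, y) ∈ cube S T := by
  have hyb : ((y, b) : X × X) ∈ cube2 S := proj23_mem h
  have hby := cube2S_symm hyb
  have hB : (b, y, b, y) ∈ cube S T := cube2S_to_cube hby
  exact Tstar hST hmin hd h hB

lemma flip1_mem (hST : ∀ x, S (T x) = T (S x)) {p : X × X × X × X} (hp : p ∈ cube S T) :
    ((p.2.1, p.1, p.2.2.2, p.2.2.1) : X × X × X × X) ∈ cube S T := by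
  refine map_mem_closure
    (f := fun p : X × X × X × X => ((p.2.1, p.1, p.2.2.2, p.2.2.1) : X × X × X × X))
    ?_ hp ?_
  · exact (continuous_fst.comp continuous_snd).prodMk (continuous_fst.prodMk
      ((continuous_snd.comp (continuous_snd.comp continuous_snd)).prodMk
        (continuous_fst.comp (continuous_snd.comp continuous_snd))))
  · rintro _ ⟨x, n, m, rfl⟩
    refine ⟨hpow S n x, -n, m, ?_⟩
    show ((hpow S n x, x, hpow S n (hpow T m x), hpow T m x) : X × X × X × X)
      = (hpow S n x, hpow S (-n) (hpow S n x), hpow T m (hpow S n x),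
        hpow S (-n) (hpow T m (hpow S n x)))
    rw [hpow_neg_cancel, ← hpow_comm S T hST n m x, hpow_neg_cancel]
  
lemma flip2_mem (hST : ∀ x, S (T x) = T (S x)) {p : X × X × X × X} (hp : p ∈ cube S T) :
    ((p.2.2.1, p.2.2.2, p.1, p.2.1) : X × X × X × X) ∈ cube S T := by
  refine map_mem_closure
    (f := fun p : X × X × X × X => ((p.2.2.1, p.2.2.2, p.1, p.2.1) : X × X × X × X))
    ?_ hp ?_
  · exact (continuous_fst.comp (continuous_snd.comp continuous_snd)).prodMk
      ((continuous_snd.comp (continuous_snd.comp continuous_snd)).prodMk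
        (continuous_fst.prodMk (continuous_fst.comp continuous_snd)))
  · rintro _ ⟨x, n, m, rfl⟩
    refine ⟨hpow T m x, n, -m, ?_⟩
    show ((hpow T m x, hpow S n (hpow T m x), x, hpow S n x) : X × X × X × X)
      = (hpow T m x, hpow S n (hpow T m x), hpow T (-m) (hpow T m x),
        hpow S n (hpow T (-m) (hpow T m x)))
    rw [hpow_neg_cancel]

end Main

end Stmt12Aux

theorem stmt12 {X : Type*} [MetricSpace X] [CompactSpace X] (S T : X ≃ₜ X)
    (hST : ∀ x, S (T x) = T (S x)) (hmin : minimalST S T) (hd : distalST S T) :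
    IsClosed (relS S T ∩ relT S T) ∧
    Equivalence (fun x y : X => (x, y) ∈ relS S T ∩ relT S T) := by
  open Stmt12Aux in
  constructor
  · have h1 : IsClosed (relS S T) := by
      have heq : relS S T = (fun p : X × X × X × X => ((p.1, p.2.1) : X × X)) ''
          (cube S T ∩ {p : X × X × X × X | p.2.2.1 = p.2.2.2}) := by
        ext ⟨u, v⟩
        constructor
        · rintro ⟨a, ha⟩
          exact ⟨(u, v, a, a), ⟨ha, rfl⟩, rfl⟩
        · rintro ⟨⟨p1, p2, p3, p4⟩, ⟨hp, he⟩, hproj⟩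
          have he' : p3 = p4 := he
          have e1 : p1 = u := congrArg (fun q : X × X => q.1) hproj
          have e2 : p2 = v := congrArg (fun q : X × X => q.2) hproj
          refine ⟨p3, ?_⟩
          rw [← e1, ← e2]
          rw [← he'] at hp
          exact hp
      rw [heq]
      refine (IsCompact.image ?_ ?_).isClosed
      · exact (isClosed_closure.isCompact).inter_right
          (isClosed_eq (continuous_fst.comp (continuous_snd.comp continuous_snd))
            (continuous_snd.comp (continuous_snd.comp continuous_snd)))
      · exact continuous_fst.prodMk (continuous_fst.comp continuous_snd)
    have h2 : IsClosed (relT S T) := by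
      have heq : relT S T = (fun p : X × X × X × X => ((p.1, p.2.2.1) : X × X)) ''
          (cube S T ∩ {p : X × X × X × X | p.2.1 = p.2.2.2}) := by
        ext ⟨u, v⟩
        constructor
        · rintro ⟨b, hb⟩
          exact ⟨(u, b, v, b), ⟨hb, rfl⟩, rfl⟩
        · rintro ⟨⟨p1, p2, p3, p4⟩, ⟨hp, he⟩, hproj⟩
          have he' : p2 = p4 := he
          have e1 : p1 = u := congrArg (fun q : X × X => q.1) hproj
          have e2 : p3 = v := congrArg (fun q : X × X => q.2) hproj
          refine ⟨p2, ?_⟩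
          rw [← e1, ← e2]
          rw [← he'] at hp
          exact hp
      rw [heq]
      refine (IsCompact.image ?_ ?_).isClosed
      · exact (isClosed_closure.isCompact).inter_right
          (isClosed_eq (continuous_fst.comp continuous_snd)
            (continuous_snd.comp (continuous_snd.comp continuous_snd)))
      · exact continuous_fst.prodMk
          (continuous_fst.comp (continuous_snd.comp continuous_snd))
    exact h1.inter h2
  · constructor
    · intro x
      have hc : (x, x, x, x) ∈ cube S T := by
        have := gen_mem_cube (S := S) (T := T) x 0 0
        rwa [hpow_zero, hpow_zero, hpow_zero] at this
      exact ⟨⟨x, hc⟩, ⟨x, hc⟩⟩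
    · rintro x y ⟨-, ⟨b, hxbyb⟩⟩
      have hxyyy := D1 hST hmin hd hxbyb
      have hf1 := flip1_mem hST hxyyy
      have hf2 := flip2_mem hST hxyyy
      exact ⟨⟨y, hf1⟩, ⟨y, hf2⟩⟩
    · rintro x y z ⟨-, ⟨b, hxb⟩⟩ ⟨-, ⟨c, hyc⟩⟩
      have h1 := D1 hST hmin hd hxb
      have h2 := D1 hST hmin hd hyc
      have h3 := D2core hST hmin hd h1 h2
      exact ⟨⟨z, h3⟩, ⟨z, h3⟩⟩
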